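/- Let (Ω, 𝓕, P) be a probability space, let h ≥ 1 be a natural number, and let g_1, …, g_h : Ω → ℝ^d be independent, identically distributed, square-integrable random vectors with common mean E[g_j] = v ∈ ℝ^d and E‖g_j − v‖² ≤ σ²‖v‖² for a real σ ≥ 0. Let M(ω) = max_{1 ≤ j ≤ h} ‖g_j(ω)‖. Then E[M²] ≤ (hσ² + (1 + k_h σ)²)·‖v‖², where k_h = 1 + (h − 1)/√(2h − 1). -/

import Mathlib

open MeasureTheory ProbabilityTheory Set
open scoped ProbabilityTheory ENNReal

/-- `k_x = 1 + (x - 1)/√(2x - 1)` for `x ≥ 1`. -/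
noncomputable def kfun (x : ℝ) : ℝ := 1 + (x - 1) / Real.sqrt (2 * x - 1)

noncomputable def gfun (h : ℕ) (r : ℝ) : ℝ :=
  (Set.Iio (1:ℝ)).indicator (fun r => (h:ℝ) * (1 - r) ^ (h - 1)) r

lemma gfun_nonneg (h : ℕ) (r : ℝ) : 0 ≤ gfun h r := by
  unfold gfun
  by_cases hr : r ∈ Set.Iio (1:ℝ)
  · rw [Set.indicator_of_mem hr]
    have : (0:ℝ) ≤ 1 - r := by simp at hr; linarith
    positivity
  · rw [Set.indicator_of_notMem hr]

lemma gfun_le (h : ℕ) {r : ℝ} (hr : 0 ≤ r) : gfun h r ≤ h := by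
  unfold gfun
  by_cases hmem : r ∈ Set.Iio (1:ℝ)
  · rw [Set.indicator_of_mem hmem]
    simp only [Set.mem_Iio] at hmem
    have h1 : (1 - r) ^ (h - 1) ≤ 1 := by
      apply pow_le_one₀ (by linarith) (by linarith)
    nlinarith [Nat.cast_nonneg (α := ℝ) h]
  · rw [Set.indicator_of_notMem hmem]; positivity

lemma gfun_measurable (h : ℕ) : Measurable (gfun h) := by
  unfold gfun
  exact (((measurable_const).mul ((measurable_const.sub measurable_id).pow_const _))).indicator
    measurableSet_Iio

lemma gfun_intervalIntegrable (h : ℕ) : ∀ t : ℝ, 0 < t →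
    IntervalIntegrable (gfun h) volume 0 t := by
  intro t ht
  rw [intervalIntegrable_iff]
  apply Measure.integrableOn_of_bounded (M := (h:ℝ))
  · exact (measure_Ioc_lt_top (a := min 0 t) (b := max 0 t)).ne
  · exact (gfun_measurable h).aestronglyMeasurable
  · refine (ae_restrict_iff' measurableSet_uIoc).2 (Filter.Eventually.of_forall ?_)
    intro r hr
    have hr0 : 0 ≤ r := by
      rcases hr with ⟨h1, h2⟩
      have h3 : min 0 t = 0 := min_eq_left ht.le
      rw [h3] at h1
      linarith
    rw [Real.norm_eq_abs, abs_of_nonneg (gfun_nonneg h r)]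
    exact gfun_le h hr0

-- plain FTC for the non-indicator version
lemma aux_integral (h : ℕ) (hh : 1 ≤ h) (x : ℝ) :
    ∫ r in (0:ℝ)..x, (h:ℝ) * (1 - r) ^ (h - 1) = 1 - (1 - x) ^ h := by
  have : (∫ r in (0:ℝ)..x, (h:ℝ) * (1 - r) ^ (h - 1))
      = (h:ℝ) * ∫ r in (0:ℝ)..x, (fun s => s ^ (h-1)) (1 - r) := by
    rw [← intervalIntegral.integral_const_mul]
  rw [this, intervalIntegral.integral_comp_sub_left (fun s => s ^ (h-1)) 1]
  rw [integral_pow]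
  have hc : ((h:ℝ) - 1) + 1 = h := by ring
  have hn : (h - 1 : ℕ) + 1 = h := Nat.succ_pred_eq_of_pos hh
  rw [hn]
  have hh' : (h:ℝ) ≠ 0 := Nat.cast_ne_zero.mpr (by omega)
  field_simp
  push_cast [Nat.cast_sub hh]; ring

lemma gfun_integral (h : ℕ) (hh : 1 ≤ h) {x : ℝ} (hx0 : 0 ≤ x) (hx1 : x ≤ 1) :
    ∫ r in (0:ℝ)..x, gfun h r = 1 - (1 - x) ^ h := by
  rw [← aux_integral h hh x]
  apply intervalIntegral.integral_congr_ae
  have : ∀ᵐ r ∂(volume : Measure ℝ), r ≠ 1 := by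
    refine ae_iff.2 ?_
    simp [Set.setOf_eq_eq_singleton']
  filter_upwards [this] with r hr hmem
  unfold gfun
  have hle : r ≤ 1 := by
    rw [Set.mem_uIoc] at hmem
    rcases hmem with ⟨_, h2⟩ | ⟨_, h2⟩ <;> linarith
  rw [Set.indicator_of_mem (Set.mem_Iio.2 (lt_of_le_of_ne hle hr))]

lemma aux_sq_integral (h : ℕ) (hh : 1 ≤ h) :
    ∫ r in (0:ℝ)..1, ((h:ℝ) * (1 - r) ^ (h - 1))^2 = (h:ℝ)^2 / (2*h-1) := by
  have heq : ∀ r : ℝ, ((h:ℝ) * (1 - r) ^ (h - 1))^2 = (h:ℝ)^2 * (fun s => s ^ ((h-1)*2)) (1 - r) := by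
    intro r; rw [mul_pow, ← pow_mul]
  simp_rw [heq]
  rw [intervalIntegral.integral_const_mul,
    intervalIntegral.integral_comp_sub_left (fun s => s ^ ((h-1)*2)) 1]
  simp only [sub_self, sub_zero]
  rw [integral_pow]
  have hc : (((h-1)*2 : ℕ) : ℝ) + 1 = 2*(h:ℝ) - 1 := by
    push_cast [Nat.cast_sub hh]; ring
  rw [one_pow, zero_pow (by omega : (h-1)*2 + 1 ≠ 0), hc]
  ring

lemma gfun_sq_lintegral (h : ℕ) (hh : 1 ≤ h) :
    ∫⁻ r in Set.Ioi (0:ℝ), (ENNReal.ofReal (gfun h r))^2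
      = ENNReal.ofReal ((h:ℝ)^2 / (2*h-1)) := by
  have hsplit : Set.Ioi (0:ℝ) = Set.Ioo 0 1 ∪ Set.Ici 1 := (Set.Ioo_union_Ici_eq_Ioi one_pos).symm
  rw [hsplit, lintegral_union measurableSet_Ici ((Set.Iio_disjoint_Ici le_rfl).mono_left Set.Ioo_subset_Iio_self)]
  have hzero : ∫⁻ r in Set.Ici (1:ℝ), (ENNReal.ofReal (gfun h r))^2 = 0 := by
    rw [setLIntegral_congr_fun measurableSet_Ici
      (fun r hr => ?_), lintegral_zero]
    have : gfun h r = 0 := by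
      unfold gfun
      rw [Set.indicator_of_notMem (by simp [Set.mem_Iio]; exact hr)]
    rw [this]
    simp
  rw [hzero, add_zero]
  have hpt : ∀ r : ℝ, (ENNReal.ofReal (gfun h r))^2 = ENNReal.ofReal ((gfun h r)^2) := by
    intro r; rw [← ENNReal.ofReal_pow (gfun_nonneg h r)]
  simp_rw [hpt]
  rw [← ofReal_integral_eq_lintegral_ofReal]
  · congr 1
    have h1 : ∫ r in Set.Ioo (0:ℝ) 1, (gfun h r)^2 = ∫ r in Set.Ioc (0:ℝ) 1, (gfun h r)^2 :=
      integral_Ioc_eq_integral_Ioo.symm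
    rw [h1, ← intervalIntegral.integral_of_le zero_le_one, ← aux_sq_integral h hh]
    apply intervalIntegral.integral_congr_ae
    have hae : ∀ᵐ r ∂(volume : Measure ℝ), r ≠ 1 := by
      refine ae_iff.2 ?_; simp [Set.setOf_eq_eq_singleton']
    filter_upwards [hae] with r hr hmem
    have hle : r ≤ 1 := by
      rw [Set.mem_uIoc] at hmem
      rcases hmem with ⟨_, h2⟩ | ⟨_, h2⟩ <;> linarith
    unfold gfun
    rw [Set.indicator_of_mem (Set.mem_Iio.2 (lt_of_le_of_ne hle hr))]
  · refine Measure.integrableOn_of_bounded (μ := volume) (s := Set.Ioo (0:ℝ) 1)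
      (f := fun r => (gfun h r)^2) (M := (h:ℝ)^2)
      (measure_Ioo_lt_top).ne (((gfun_measurable h).pow_const 2).aestronglyMeasurable) ?_
    refine (ae_restrict_iff' measurableSet_Ioo).2 (Filter.Eventually.of_forall fun r hr => ?_)
    rw [Real.norm_eq_abs, abs_of_nonneg (by positivity)]
    have h1 := gfun_le h hr.1.le
    have h0 := gfun_nonneg h r
    nlinarith [sq_nonneg (gfun h r)]
  · exact Filter.Eventually.of_forall fun r => by positivity

lemma lint_two_mul_Ioo (c : ℝ) (hc : 0 ≤ c) :
    ∫⁻ t in Set.Ioo (0:ℝ) c, ENNReal.ofReal (2*t) = ENNReal.ofReal (c^2) := by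
  rw [← ofReal_integral_eq_lintegral_ofReal]
  · congr 1
    rw [← integral_Ioc_eq_integral_Ioo, ← intervalIntegral.integral_of_le hc]
    rw [intervalIntegral.integral_const_mul, integral_id]
    ring
  · refine Measure.integrableOn_of_bounded (μ := volume) (s := Set.Ioo (0:ℝ) c)
      (f := fun t => 2*t) (M := 2*c) (measure_Ioo_lt_top).ne
      ((measurable_const.mul measurable_id).aestronglyMeasurable) ?_
    refine (ae_restrict_iff' measurableSet_Ioo).2 (Filter.Eventually.of_forall fun r hr => ?_)
    simp only [Real.norm_eq_abs]
    rw [abs_of_nonneg (by linarith [hr.1])]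
    linarith [hr.2]
  · refine (ae_restrict_iff' measurableSet_Ioo).2 (Filter.Eventually.of_forall fun r hr => ?_)
    simp only [Pi.zero_apply]
    linarith [hr.1]

/-- integral of `2t` over a down-closed subset of `(0,∞)` dominates the square of its measure. -/
lemma lint_two_mul_down_closed (E : Set ℝ) (hE : MeasurableSet E) (hE0 : E ⊆ Set.Ioi 0)
    (hdc : ∀ a ∈ E, ∀ b : ℝ, 0 < b → b < a → b ∈ E) :
    (volume E) * (volume E) ≤ ∫⁻ t in E, ENNReal.ofReal (2*t) := by
  have key : ∀ c : ℝ, 0 ≤ c → ENNReal.ofReal c ≤ volume E →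
      ENNReal.ofReal (c^2) ≤ ∫⁻ t in E, ENNReal.ofReal (2*t) := by
    intro c hc hcE
    have hsub : Set.Ioo 0 c ⊆ E := by
      intro x hx
      by_contra hxE
      have hEsub : E ⊆ Set.Ioc 0 x := by
        intro a ha
        refine ⟨hE0 ha, ?_⟩
        by_contra hax
        push_neg at hax
        exact hxE (hdc a ha x hx.1 hax)
      have h1 : volume E ≤ ENNReal.ofReal x := by
        calc volume E ≤ volume (Set.Ioc 0 x) := measure_mono hEsub
        _ = ENNReal.ofReal x := by rw [Real.volume_Ioc, sub_zero]
      have h2 : ENNReal.ofReal c ≤ ENNReal.ofReal x := le_trans hcE h1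
      rw [ENNReal.ofReal_le_ofReal_iff (by linarith [hx.1, hx.2])] at h2
      linarith [hx.2]
    calc ENNReal.ofReal (c^2) = ∫⁻ t in Set.Ioo (0:ℝ) c, ENNReal.ofReal (2*t) :=
        (lint_two_mul_Ioo c hc).symm
      _ ≤ ∫⁻ t in E, ENNReal.ofReal (2*t) := lintegral_mono_set hsub
  rcases eq_or_ne (volume E) ⊤ with htop | hfin
  · rw [htop]
    have : ∀ n : ℕ, ENNReal.ofReal ((n:ℝ)^2) ≤ ∫⁻ t in E, ENNReal.ofReal (2*t) := by
      intro n
      exact key n (Nat.cast_nonneg n) (by rw [htop]; exact le_top)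
    have htop2 : ∫⁻ t in E, ENNReal.ofReal (2*t) = ⊤ := by
      by_contra hne
      obtain ⟨n, hn⟩ := exists_nat_gt ((∫⁻ t in E, ENNReal.ofReal (2*t)).toReal)
      have h1 := this n
      have h2 : ENNReal.ofReal ((n:ℝ)^2) ≤ ENNReal.ofReal ((∫⁻ t in E, ENNReal.ofReal (2*t)).toReal) := by
        rwa [ENNReal.ofReal_toReal hne]
      have h3 := le_trans h1 (le_of_eq (ENNReal.ofReal_toReal hne).symm)
      rw [ENNReal.ofReal_le_ofReal_iff ENNReal.toReal_nonneg] at h3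
      have h0T : (0:ℝ) ≤ (∫⁻ t in E, ENNReal.ofReal (2*t)).toReal := ENNReal.toReal_nonneg
      have hn0 : (0:ℝ) < (n:ℝ) := lt_of_le_of_lt h0T hn
      have hn1 : (1:ℝ) ≤ (n:ℝ) := by
        have : n ≠ 0 := by
          intro hz; rw [hz] at hn0; simp at hn0
        exact_mod_cast Nat.one_le_iff_ne_zero.2 this
      nlinarith
    rw [htop2]
    exact le_top
  · set c := (volume E).toReal with hcdef
    have hc0 : 0 ≤ c := ENNReal.toReal_nonneg
    have hcE : ENNReal.ofReal c = volume E := ENNReal.ofReal_toReal hfin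
    have := key c hc0 (le_of_eq hcE)
    calc volume E * volume E = ENNReal.ofReal c * ENNReal.ofReal c := by rw [hcE]
      _ = ENNReal.ofReal (c^2) := by rw [← ENNReal.ofReal_mul hc0]; ring_nf
      _ ≤ _ := this

lemma EN_bound {Ω : Type*} [MeasurableSpace Ω] (P : Measure Ω) [IsProbabilityMeasure P]
    (h : ℕ) (hh : 1 ≤ h) (N Y0 : Ω → ℝ)
    (hNmeas : AEMeasurable N P) (hNnn : 0 ≤ᵐ[P] N)
    (hY0meas : AEMeasurable Y0 P) (hY0nn : 0 ≤ᵐ[P] Y0)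
    (htail : ∀ t : ℝ, 0 < t → P {ω | t < N ω} = 1 - (P {ω | Y0 ω ≤ t})^h)
    (b : ℝ) (hb : 0 ≤ b)
    (hB : ∫⁻ ω, ENNReal.ofReal ((Y0 ω)^2) ∂P ≤ ENNReal.ofReal (b^2)) :
    ∫⁻ ω, ENNReal.ofReal (N ω) ∂P
      ≤ ENNReal.ofReal (((h:ℝ) / Real.sqrt (2*(h:ℝ)-1)) * b) := by
  classical
  -- the tail function of Y0
  set u : ℝ → ℝ := fun t => (P {ω | t < Y0 ω}).toReal with hu_def
  have hPfin : ∀ t : ℝ, P {ω | t < Y0 ω} ≠ ⊤ := fun t => measure_ne_top P _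
  have hq_eq : ∀ t : ℝ, P {ω | t < Y0 ω} = ENNReal.ofReal (u t) := by
    intro t; rw [hu_def]; simp [ENNReal.ofReal_toReal (hPfin t)]
  have hu_nonneg : ∀ t, 0 ≤ u t := fun t => ENNReal.toReal_nonneg
  have hu_le_one : ∀ t, u t ≤ 1 := by
    intro t
    rw [hu_def]
    simp only []
    rw [← ENNReal.toReal_one]
    exact ENNReal.toReal_mono ENNReal.one_ne_top prob_le_one
  have hu_anti : Antitone u := by
    intro s t hst
    apply ENNReal.toReal_mono (hPfin s)
    exact measure_mono (fun ω hω => lt_of_le_of_lt hst hω)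
  have hu_meas : Measurable u := hu_anti.measurable
  -- complement identity
  have hcompl : ∀ t : ℝ, P {ω | Y0 ω ≤ t} = 1 - ENNReal.ofReal (u t) := by
    intro t
    have hset : {ω | Y0 ω ≤ t} = {ω | t < Y0 ω}ᶜ := by
      ext ω; simp [not_lt]
    rw [hset, prob_compl_eq_one_sub₀, hq_eq]
    exact nullMeasurableSet_lt aemeasurable_const hY0meas
  -- tail in terms of gfun integral
  have htail' : ∀ t : ℝ, t ∈ Set.Ioi (0:ℝ) →
      P {ω | t < N ω} = ENNReal.ofReal (∫ r in (0:ℝ)..(u t), gfun h r) := by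
    intro t ht
    rw [htail t ht, hcompl t]
    rw [gfun_integral h hh (hu_nonneg t) (hu_le_one t)]
    have h1 : (1:ℝ≥0∞) - ENNReal.ofReal (u t) = ENNReal.ofReal (1 - u t) := by
      rw [ENNReal.ofReal_sub 1 (hu_nonneg t), ENNReal.ofReal_one]
    rw [h1, ← ENNReal.ofReal_pow (by linarith [hu_le_one t]), ← ENNReal.ofReal_one,
      ← ENNReal.ofReal_sub _ (pow_nonneg (by linarith [hu_le_one t]) h)]
  -- layer cake for N
  have lc1 : ∫⁻ ω, ENNReal.ofReal (N ω) ∂P = ∫⁻ t in Set.Ioi 0, P {ω | t < N ω} :=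
    lintegral_eq_lintegral_meas_lt P hNnn hNmeas
  -- substitute
  have lc1' : ∫⁻ ω, ENNReal.ofReal (N ω) ∂P
      = ∫⁻ t in Set.Ioi 0, ENNReal.ofReal (∫ r in (0:ℝ)..(u t), gfun h r) := by
    rw [lc1]
    exact setLIntegral_congr_fun measurableSet_Ioi
      htail'
  -- layer cake on the t-side
  set m : ℝ → ℝ≥0∞ := fun r => (volume.restrict (Set.Ioi (0:ℝ))) {t | r < u t} with hm_def
  have lc2 : ∫⁻ t in Set.Ioi 0, ENNReal.ofReal (∫ r in (0:ℝ)..(u t), gfun h r)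
      = ∫⁻ r in Set.Ioi 0, m r * ENNReal.ofReal (gfun h r) := by
    exact lintegral_comp_eq_lintegral_meas_lt_mul (volume.restrict (Set.Ioi (0:ℝ)))
      (Filter.Eventually.of_forall hu_nonneg) hu_meas.aemeasurable
      (gfun_intervalIntegrable h)
      (Filter.Eventually.of_forall (fun r => gfun_nonneg h r))
  -- measurability of m
  have hm_anti : Antitone m := by
    intro r s hrs
    exact measure_mono (fun t ht => lt_of_le_of_lt hrs ht)
  have hm_meas : Measurable m := hm_anti.measurable
  have hW_meas : Measurable (fun r => ENNReal.ofReal (gfun h r)) :=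
    (gfun_measurable h).ennreal_ofReal
  have hpow2 : ∀ x : ℝ≥0∞, x ^ (2:ℝ) = x^(2:ℕ) := fun x => by
    rw [show (2:ℝ) = ((2:ℕ):ℝ) by norm_num, ENNReal.rpow_natCast]
  -- Cauchy-Schwarz
  have hCS : ∫⁻ r in Set.Ioi (0:ℝ), m r * ENNReal.ofReal (gfun h r)
      ≤ (∫⁻ r in Set.Ioi (0:ℝ), (m r)^(2:ℕ)) ^ (1/2:ℝ)
        * (∫⁻ r in Set.Ioi (0:ℝ), (ENNReal.ofReal (gfun h r))^(2:ℕ)) ^ (1/2:ℝ) := by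
    have := ENNReal.lintegral_mul_le_Lp_mul_Lq (volume.restrict (Set.Ioi (0:ℝ)))
      (⟨by norm_num, by norm_num, by norm_num⟩ : Real.HolderConjugate 2 2)
      hm_meas.aemeasurable hW_meas.aemeasurable
    simp_rw [hpow2] at this
    exact this
  -- the B-side bound
  have hBside : ∫⁻ r in Set.Ioi (0:ℝ), (m r)^(2:ℕ) ≤ ENNReal.ofReal (b^2) := by
    have e1 : ∫⁻ ω, ENNReal.ofReal ((Y0 ω)^2) ∂P
        = ∫⁻ t in Set.Ioi 0, P {ω | t < Y0 ω} * ENNReal.ofReal (2*t) := by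
      have hpt : ∀ ω, ENNReal.ofReal ((Y0 ω)^2)
          = ENNReal.ofReal (∫ t in (0:ℝ)..(Y0 ω), 2*t) := by
        intro ω; congr 1
        rw [intervalIntegral.integral_const_mul, integral_id]; ring
      simp_rw [hpt]
      exact lintegral_comp_eq_lintegral_meas_lt_mul P hY0nn hY0meas
        (fun t _ => (continuous_const.mul continuous_id).intervalIntegrable 0 t)
        ((ae_restrict_iff' measurableSet_Ioi).2
          (Filter.Eventually.of_forall fun t ht => by
            have := Set.mem_Ioi.mp ht; linarith))
    set μ' := (volume.restrict (Set.Ioi (0:ℝ))).withDensity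
      (fun t => ENNReal.ofReal (2*t)) with hμ'
    have hdens_meas : Measurable (fun t : ℝ => ENNReal.ofReal (2*t)) :=
      (measurable_const.mul measurable_id).ennreal_ofReal
    have e2 : ∫⁻ t in Set.Ioi 0, P {ω | t < Y0 ω} * ENNReal.ofReal (2*t)
        = ∫⁻ t, ENNReal.ofReal (u t) ∂μ' := by
      rw [hμ', lintegral_withDensity_eq_lintegral_mul _ hdens_meas hu_meas.ennreal_ofReal]
      apply lintegral_congr
      intro t
      simp only [Pi.mul_apply]
      rw [hq_eq t, mul_comm]
    have e3 : ∫⁻ t, ENNReal.ofReal (u t) ∂μ' = ∫⁻ s in Set.Ioi 0, μ' {t | s < u t} :=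
      lintegral_eq_lintegral_meas_lt μ' (Filter.Eventually.of_forall hu_nonneg)
        hu_meas.aemeasurable
    have e4 : ∀ s : ℝ, s ∈ Set.Ioi (0:ℝ) → (m s)^(2:ℕ) ≤ μ' {t | s < u t} := by
      intro s _
      have hset_meas : MeasurableSet {t : ℝ | s < u t} := hu_meas measurableSet_Ioi
      rw [hμ', withDensity_apply _ hset_meas, Measure.restrict_restrict hset_meas]
      have hmeq : m s = volume ({t : ℝ | s < u t} ∩ Set.Ioi 0) := by
        rw [hm_def]
        simp only []
        rw [Measure.restrict_apply hset_meas]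
      rw [hmeq, sq]
      apply lint_two_mul_down_closed
      · exact hset_meas.inter measurableSet_Ioi
      · exact fun t ht => ht.2
      · rintro a ⟨ha1, _⟩ c hc1 hca
        exact ⟨lt_of_lt_of_le ha1 (hu_anti hca.le), hc1⟩
    calc ∫⁻ r in Set.Ioi (0:ℝ), (m r)^(2:ℕ)
        ≤ ∫⁻ s in Set.Ioi (0:ℝ), μ' {t | s < u t} := by
          apply setLIntegral_mono' measurableSet_Ioi e4
      _ = ∫⁻ ω, ENNReal.ofReal ((Y0 ω)^2) ∂P := by rw [← e3, ← e2, ← e1]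
      _ ≤ ENNReal.ofReal (b^2) := hB
  -- put everything together
  have hWsq := gfun_sq_lintegral h hh
  have hfinal : ∫⁻ ω, ENNReal.ofReal (N ω) ∂P
      ≤ (ENNReal.ofReal (b^2)) ^ (1/2:ℝ) * (ENNReal.ofReal ((h:ℝ)^2/(2*(h:ℝ)-1))) ^ (1/2:ℝ) := by
    rw [lc1', lc2]
    refine le_trans hCS ?_
    gcongr
    rw [← hWsq]
  have h2h : (0:ℝ) ≤ 2*(h:ℝ)-1 := by
    have : (1:ℝ) ≤ (h:ℝ) := by exact_mod_cast hh
    linarith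
  refine le_trans hfinal (le_of_eq ?_)
  rw [ENNReal.ofReal_rpow_of_nonneg (by positivity) (by norm_num),
    ENNReal.ofReal_rpow_of_nonneg (div_nonneg (by positivity) h2h) (by norm_num),
    ← ENNReal.ofReal_mul (by positivity)]
  congr 1
  rw [← Real.sqrt_eq_rpow, ← Real.sqrt_eq_rpow, Real.sqrt_sq hb,
    Real.sqrt_div (by positivity : (0:ℝ) ≤ (h:ℝ)^2), Real.sqrt_sq (Nat.cast_nonneg h)]
  ring

lemma kfun_ge (h : ℕ) (hh : 1 ≤ h) : (h:ℝ) / Real.sqrt (2*(h:ℝ)-1) ≤ kfun h := by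
  have h1 : (1:ℝ) ≤ (h:ℝ) := by exact_mod_cast hh
  have hs : 1 ≤ Real.sqrt (2*(h:ℝ)-1) := by
    have := Real.sqrt_le_sqrt (show (1:ℝ) ≤ 2*(h:ℝ)-1 by linarith)
    rwa [Real.sqrt_one] at this
  have hs0 : 0 < Real.sqrt (2*(h:ℝ)-1) := by linarith
  unfold kfun
  have e1 : (h:ℝ) / Real.sqrt (2*(h:ℝ)-1)
      = 1 / Real.sqrt (2*(h:ℝ)-1) + ((h:ℝ)-1) / Real.sqrt (2*(h:ℝ)-1) := by
    field_simp
    ring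
  rw [e1]
  have e2 : 1 / Real.sqrt (2*(h:ℝ)-1) ≤ 1 := by
    rw [div_le_one hs0]; exact hs
  linarith

lemma kfun_nonneg (h : ℕ) (hh : 1 ≤ h) : 0 ≤ kfun h := by
  have h1 : (1:ℝ) ≤ (h:ℝ) := by exact_mod_cast hh
  have hs0 : 0 ≤ Real.sqrt (2*(h:ℝ)-1) := Real.sqrt_nonneg _
  unfold kfun
  have : 0 ≤ ((h:ℝ)-1) / Real.sqrt (2*(h:ℝ)-1) := div_nonneg (by linarith) hs0
  linarith

/-- Lemma (second moment of the maximum): for `h ≥ 1` i.i.d. square-integrable random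
vectors `g_1, …, g_h` in `ℝ^d` with mean `v` and `E‖g_j − v‖² ≤ σ²‖v‖²`, the maximum
`M = max_j ‖g_j‖` satisfies `E[M²] ≤ (hσ² + (1 + k_h σ)²)‖v‖²`. -/
theorem expectation_max_norm_sq_le
    {Ω : Type*} [MeasureSpace Ω] [IsProbabilityMeasure (ℙ : Measure Ω)]
    (d h : ℕ) (hh : 1 ≤ h)
    (g : Fin h → Ω → EuclideanSpace ℝ (Fin d))
    (hindep : iIndepFun g ℙ)
    (hident : ∀ i j, IdentDistrib (g i) (g j) ℙ ℙ)
    (hL2 : ∀ j, MemLp (g j) 2 ℙ)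
    (v : EuclideanSpace ℝ (Fin d)) (hmean : ∀ j, ∫ ω, g j ω ∂ℙ = v)
    (σ : ℝ) (hσ : 0 ≤ σ) (hvar : ∀ j, ∫ ω, ‖g j ω - v‖ ^ 2 ∂ℙ ≤ σ ^ 2 * ‖v‖ ^ 2) :
    ∫ ω, (⨆ j : Fin h, ‖g j ω‖) ^ 2 ∂ℙ
      ≤ ((h : ℝ) * σ ^ 2 + (1 + kfun h * σ) ^ 2) * ‖v‖ ^ 2 := by
  classical
  haveI : Nonempty (Fin h) := ⟨⟨0, hh⟩⟩
  set j0 : Fin h := ⟨0, hh⟩ with hj0_def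
  set Y : Fin h → Ω → ℝ := fun j ω => ‖g j ω - v‖ with hY_def
  set N : Ω → ℝ := fun ω => ⨆ j, Y j ω with hN_def
  set M : Ω → ℝ := fun ω => ⨆ j : Fin h, ‖g j ω‖ with hM_def
  -- measurability
  have hYmeas : ∀ j, AEMeasurable (Y j) ℙ := fun j =>
    (((hL2 j).aestronglyMeasurable.sub aestronglyMeasurable_const).norm).aemeasurable
  have hNmeas : AEMeasurable N ℙ := AEMeasurable.iSup hYmeas
  have hMmeas : AEMeasurable M ℙ :=
    AEMeasurable.iSup (fun j => ((hL2 j).aestronglyMeasurable.norm).aemeasurable)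
  have hYnn : ∀ j ω, 0 ≤ Y j ω := fun j ω => norm_nonneg _
  have hNnn : ∀ ω, 0 ≤ N ω := fun ω => Real.iSup_nonneg (fun j => hYnn j ω)
  have hMnn : ∀ ω, 0 ≤ M ω := fun ω => Real.iSup_nonneg (fun j => norm_nonneg _)
  -- per-coordinate second moment, as lintegral
  have hYint : ∀ j, Integrable (fun ω => (Y j ω)^2) ℙ := by
    intro j
    have hmem : MemLp (fun ω => g j ω - v) 2 ℙ := (hL2 j).sub (memLp_const v)
    have := hmem.integrable_norm_rpow (by norm_num) (by norm_num)
    simpa [ENNReal.toReal_ofNat, Real.rpow_natCast] using this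
  have hYsq : ∀ j, ∫⁻ ω, ENNReal.ofReal ((Y j ω)^2) ∂ℙ ≤ ENNReal.ofReal (σ^2 * ‖v‖^2) := by
    intro j
    rw [← ofReal_integral_eq_lintegral_ofReal (hYint j)
      (Filter.Eventually.of_forall fun ω => sq_nonneg _)]
    exact ENNReal.ofReal_le_ofReal (hvar j)
  -- the tail identity from independence
  have htail : ∀ t : ℝ, 0 < t → ℙ {ω | t < N ω} = 1 - (ℙ {ω | Y j0 ω ≤ t})^h := by
    intro t ht
    have hBset : MeasurableSet {x : EuclideanSpace ℝ (Fin d) | ‖x - v‖ ≤ t} :=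
      (((continuous_id.sub continuous_const).norm).measurable) measurableSet_Iic
    have hinter : {ω | N ω ≤ t} = ⋂ j, (g j) ⁻¹' {x | ‖x - v‖ ≤ t} := by
      ext ω
      simp only [Set.mem_setOf_eq, Set.mem_iInter, Set.mem_preimage, hN_def]
      rw [ciSup_le_iff (Set.Finite.bddAbove (Set.finite_range _))]
    have hprod : ℙ (⋂ j, (g j) ⁻¹' {x | ‖x - v‖ ≤ t})
        = ∏ j : Fin h, ℙ ((g j) ⁻¹' {x | ‖x - v‖ ≤ t}) :=
      hindep.meas_iInter (fun j => ⟨{x | ‖x - v‖ ≤ t}, hBset, rfl⟩)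
    have hid : ∀ j : Fin h, ℙ ((g j) ⁻¹' {x | ‖x - v‖ ≤ t}) = ℙ {ω | Y j0 ω ≤ t} := by
      intro j
      have hident' : IdentDistrib (Y j) (Y j0) ℙ ℙ :=
        (hident j j0).comp ((continuous_id.sub continuous_const).norm).measurable
      exact hident'.measure_mem_eq measurableSet_Iic
    have hNle : ℙ {ω | N ω ≤ t} = (ℙ {ω | Y j0 ω ≤ t})^h := by
      rw [hinter, hprod]
      rw [Finset.prod_congr rfl (fun j _ => hid j), Finset.prod_const, Finset.card_univ,
        Fintype.card_fin]
    have hcompl : {ω | t < N ω} = {ω | N ω ≤ t}ᶜ := by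
      ext ω; simp [not_le]
    rw [hcompl, prob_compl_eq_one_sub₀ (nullMeasurableSet_le hNmeas aemeasurable_const), hNle]
  -- apply the core bound
  have hEN : ∫⁻ ω, ENNReal.ofReal (N ω) ∂ℙ
      ≤ ENNReal.ofReal (((h:ℝ) / Real.sqrt (2*(h:ℝ)-1)) * (σ * ‖v‖)) := by
    apply EN_bound ℙ h hh N (Y j0) hNmeas (Filter.Eventually.of_forall hNnn)
      (hYmeas j0) (Filter.Eventually.of_forall (hYnn j0)) htail (σ * ‖v‖) (by positivity)
    calc ∫⁻ ω, ENNReal.ofReal ((Y j0 ω)^2) ∂ℙ ≤ ENNReal.ofReal (σ^2 * ‖v‖^2) := hYsq j0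
      _ = ENNReal.ofReal ((σ * ‖v‖)^2) := by rw [mul_pow]
  have hEN' : ∫⁻ ω, ENNReal.ofReal (N ω) ∂ℙ ≤ ENNReal.ofReal (kfun h * σ * ‖v‖) := by
    refine le_trans hEN (ENNReal.ofReal_le_ofReal ?_)
    have := kfun_ge h hh
    have hnn : 0 ≤ σ * ‖v‖ := by positivity
    nlinarith [mul_le_mul_of_nonneg_right this hnn]
  -- pointwise bound `M ≤ ‖v‖ + N`
  have hMle : ∀ ω, M ω ≤ ‖v‖ + N ω := by
    intro ω
    refine ciSup_le fun j => ?_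
    have h1 : ‖g j ω‖ ≤ ‖v‖ + Y j ω := by
      calc ‖g j ω‖ = ‖v + (g j ω - v)‖ := by rw [add_sub_cancel]
        _ ≤ ‖v‖ + ‖g j ω - v‖ := norm_add_le _ _
    have h2 : Y j ω ≤ N ω := by
      show Y j ω ≤ ⨆ i : Fin h, Y i ω
      exact le_ciSup (Set.Finite.bddAbove (Set.finite_range (fun i : Fin h => Y i ω))) j
    linarith
  -- pointwise `N² ≤ ∑ Y j²`
  have hNsq : ∀ ω, (N ω)^2 ≤ ∑ j : Fin h, (Y j ω)^2 := by
    intro ω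
    obtain ⟨j, hj⟩ := exists_eq_ciSup_of_finite (f := fun j => Y j ω)
    have hNj : N ω = Y j ω := hj.symm
    rw [hNj]
    exact Finset.single_le_sum (fun i _ => sq_nonneg (Y i ω)) (Finset.mem_univ j)
  set eV : ℝ≥0∞ := ENNReal.ofReal ‖v‖ with heV_def
  set eN : Ω → ℝ≥0∞ := fun ω => ENNReal.ofReal (N ω) with heN_def
  have heNmeas : AEMeasurable eN ℙ := hNmeas.ennreal_ofReal
  have step1 : ∫⁻ ω, ENNReal.ofReal ((M ω)^2) ∂ℙ
      ≤ ∫⁻ ω, (eV^2 + (2 * eV * eN ω + (eN ω)^2)) ∂ℙ := by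
    apply lintegral_mono
    intro ω
    have hm : ENNReal.ofReal (M ω) ≤ eV + eN ω := by
      rw [heV_def, heN_def, ← ENNReal.ofReal_add (norm_nonneg v) (hNnn ω)]
      exact ENNReal.ofReal_le_ofReal (hMle ω)
    calc ENNReal.ofReal ((M ω)^2) = (ENNReal.ofReal (M ω))^2 :=
        ENNReal.ofReal_pow (hMnn ω) 2
      _ ≤ (eV + eN ω)^2 := by exact pow_le_pow_left' hm 2
      _ = eV^2 + (2 * eV * eN ω + (eN ω)^2) := by ring
  have m1 : AEMeasurable (fun ω => 2 * eV * eN ω) ℙ := heNmeas.const_mul _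
  have m2 : AEMeasurable (fun ω => (eN ω)^2) ℙ := heNmeas.pow_const 2
  have step2 : ∫⁻ ω, (eV^2 + (2 * eV * eN ω + (eN ω)^2)) ∂ℙ
      = eV^2 + (2 * eV * (∫⁻ ω, eN ω ∂ℙ) + ∫⁻ ω, (eN ω)^2 ∂ℙ) := by
    rw [lintegral_add_left' (aemeasurable_const) _, lintegral_add_left' m1 _,
      lintegral_const, measure_univ, mul_one, lintegral_const_mul'' _ heNmeas]
  have step3 : ∫⁻ ω, (eN ω)^2 ∂ℙ ≤ (h:ℝ≥0∞) * ENNReal.ofReal (σ^2*‖v‖^2) := by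
    have hpt : ∀ ω, (eN ω)^2 ≤ ∑ j : Fin h, ENNReal.ofReal ((Y j ω)^2) := by
      intro ω
      calc (eN ω)^2 = ENNReal.ofReal ((N ω)^2) := (ENNReal.ofReal_pow (hNnn ω) 2).symm
        _ ≤ ENNReal.ofReal (∑ j : Fin h, (Y j ω)^2) := ENNReal.ofReal_le_ofReal (hNsq ω)
        _ = ∑ j : Fin h, ENNReal.ofReal ((Y j ω)^2) :=
          ENNReal.ofReal_sum_of_nonneg (fun j _ => sq_nonneg _)
    calc ∫⁻ ω, (eN ω)^2 ∂ℙ ≤ ∫⁻ ω, ∑ j : Fin h, ENNReal.ofReal ((Y j ω)^2) ∂ℙ :=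
        lintegral_mono hpt
      _ = ∑ j : Fin h, ∫⁻ ω, ENNReal.ofReal ((Y j ω)^2) ∂ℙ :=
        lintegral_finset_sum' Finset.univ (fun j _ => ((hYmeas j).pow_const 2).ennreal_ofReal)
      _ ≤ ∑ _j : Fin h, ENNReal.ofReal (σ^2*‖v‖^2) := Finset.sum_le_sum (fun j _ => hYsq j)
      _ = (h:ℝ≥0∞) * ENNReal.ofReal (σ^2*‖v‖^2) := by
        rw [Finset.sum_const, Finset.card_univ, Fintype.card_fin, nsmul_eq_mul]
  -- combine
  have hk0 : 0 ≤ kfun h := kfun_nonneg h hh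
  have total : ∫⁻ ω, ENNReal.ofReal ((M ω)^2) ∂ℙ
      ≤ ENNReal.ofReal ((‖v‖^2 + (2*‖v‖*(kfun h*σ*‖v‖) + (h:ℝ)*(σ^2*‖v‖^2)))) := by
    calc ∫⁻ ω, ENNReal.ofReal ((M ω)^2) ∂ℙ
        ≤ eV^2 + (2 * eV * (∫⁻ ω, eN ω ∂ℙ) + ∫⁻ ω, (eN ω)^2 ∂ℙ) := step1.trans step2.le
      _ ≤ eV^2 + (2 * eV * ENNReal.ofReal (kfun h * σ * ‖v‖)
            + (h:ℝ≥0∞) * ENNReal.ofReal (σ^2*‖v‖^2)) :=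
          add_le_add le_rfl (add_le_add (mul_le_mul_right hEN' _) step3)
      _ = ENNReal.ofReal ((‖v‖^2 + (2*‖v‖*(kfun h*σ*‖v‖) + (h:ℝ)*(σ^2*‖v‖^2)))) := by
          have hterm2 : (0:ℝ) ≤ 2*‖v‖*(kfun h*σ*‖v‖) :=
            mul_nonneg (by positivity) (mul_nonneg (mul_nonneg hk0 hσ) (norm_nonneg v))
          rw [ENNReal.ofReal_add (by positivity) (add_nonneg hterm2 (by positivity)),
            ENNReal.ofReal_add hterm2 (by positivity)]
          congr 1
          · rw [heV_def, ← ENNReal.ofReal_pow (norm_nonneg v)]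
          congr 1
          · rw [ENNReal.ofReal_mul (by positivity : (0:ℝ) ≤ 2*‖v‖),
              ENNReal.ofReal_mul (by norm_num : (0:ℝ) ≤ 2), heV_def,
              ENNReal.ofReal_ofNat 2]
          · rw [ENNReal.ofReal_mul (Nat.cast_nonneg h), ENNReal.ofReal_natCast]
  have hR0 : 0 ≤ ((h : ℝ) * σ ^ 2 + (1 + kfun h * σ) ^ 2) * ‖v‖ ^ 2 := by positivity
  have hRle : (‖v‖^2 + (2*‖v‖*(kfun h*σ*‖v‖) + (h:ℝ)*(σ^2*‖v‖^2)))
      ≤ ((h : ℝ) * σ ^ 2 + (1 + kfun h * σ) ^ 2) * ‖v‖ ^ 2 := by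
    nlinarith [sq_nonneg (kfun h * σ * ‖v‖)]
  have total' : ∫⁻ ω, ENNReal.ofReal ((M ω)^2) ∂ℙ
      ≤ ENNReal.ofReal (((h : ℝ) * σ ^ 2 + (1 + kfun h * σ) ^ 2) * ‖v‖ ^ 2) :=
    total.trans (ENNReal.ofReal_le_ofReal hRle)
  -- convert to the Bochner integral
  have hconv : ∫ ω, (M ω)^2 ∂ℙ = (∫⁻ ω, ENNReal.ofReal ((M ω)^2) ∂ℙ).toReal := by
    rw [integral_eq_lintegral_of_nonneg_ae (Filter.Eventually.of_forall fun ω => sq_nonneg (M ω))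
      ((hMmeas.pow_const 2).aestronglyMeasurable)]
  show ∫ ω, (M ω)^2 ∂ℙ ≤ _
  rw [hconv]
  exact ENNReal.toReal_le_of_le_ofReal hR0 total'
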